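/- For all positive integers r and s, the mean value M(c(·,r) c(·,s)) of the function n ↦ c(n,r) c(n,s) exists and equals δ_{r,s} φ(r), where δ_{r,s} = 1 if r = s and 0 otherwise. -/

import Mathlib

open Finset Filter Topology

/-- The Ramanujan sum `c(n,r) = ∑_{1 ≤ k ≤ r, gcd(k,r)=1} exp(2πikn/r)`. -/
noncomputable def ramanujanSum (n r : ℕ) : ℂ :=
  ∑ k ∈ (Finset.Icc 1 r).filter (fun k => Nat.gcd k r = 1),
    Complex.exp (2 * Real.pi * Complex.I * k * n / r)

namespace RamAux

/-- The root of unity `e^{2πik/r}`. -/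
noncomputable def e (k r : ℕ) : ℂ := Complex.exp (2 * Real.pi * Complex.I * k / r)

lemma e_pow (k r n : ℕ) :
    Complex.exp (2 * Real.pi * Complex.I * k * n / r) = (e k r) ^ n := by
  rw [e, ← Complex.exp_nat_mul]
  congr 1
  ring

lemma norm_e (k r : ℕ) : ‖e k r‖ = 1 := by
  have : (2 * Real.pi * Complex.I * k / r) = ((2 * Real.pi * k / r : ℝ) : ℂ) * Complex.I := by
    push_cast; ring
  rw [e, this, Complex.norm_exp_ofReal_mul_I]

lemma e_mul_e (k l r s : ℕ) (hr : 0 < r) (hs : 0 < s) :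
    e k r * e l s
      = Complex.exp (2 * Real.pi * Complex.I * ((k * s + l * r : ℕ)) / ((r * s : ℕ))) := by
  rw [e, e, ← Complex.exp_add]
  congr 1
  have hr' : (r : ℂ) ≠ 0 := Nat.cast_ne_zero.mpr hr.ne'
  have hs' : (s : ℂ) ≠ 0 := Nat.cast_ne_zero.mpr hs.ne'
  push_cast
  field_simp

lemma e_mul_e_eq_one_iff (k l r s : ℕ) (hr : 0 < r) (hs : 0 < s) :
    e k r * e l s = 1 ↔ r * s ∣ k * s + l * r := by
  rw [e_mul_e k l r s hr hs, Complex.exp_eq_one_iff]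
  have hrs : ((r * s : ℕ) : ℂ) ≠ 0 := Nat.cast_ne_zero.mpr (Nat.mul_ne_zero hr.ne' hs.ne')
  have h2pi : (2 * (Real.pi : ℂ) * Complex.I) ≠ 0 := by
    simp [Real.pi_ne_zero, Complex.I_ne_zero, Complex.ofReal_ne_zero]
  constructor
  · rintro ⟨m, hm⟩
    rw [div_eq_iff hrs] at hm
    have h1 : 2 * (Real.pi : ℂ) * Complex.I * ((k * s + l * r : ℕ) : ℂ)
        = 2 * (Real.pi : ℂ) * Complex.I * ((m : ℂ) * ((r * s : ℕ) : ℂ)) := by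
      linear_combination hm
    have h2 := mul_left_cancel₀ h2pi h1
    have h3 : ((k * s + l * r : ℕ) : ℤ) = m * ((r * s : ℕ) : ℤ) := by exact_mod_cast h2
    exact Int.ofNat_dvd.mp ⟨m, by linarith [h3]⟩
  · rintro ⟨t, ht⟩
    refine ⟨t, ?_⟩
    rw [ht, div_eq_iff hrs]
    push_cast
    ring

lemma count_dvd_iff (r s k l : ℕ) (hr : 0 < r) (hs : 0 < s)
    (hk1 : 1 ≤ k) (hk2 : k ≤ r) (hkc : Nat.gcd k r = 1)
    (hl1 : 1 ≤ l) (hl2 : l ≤ s) (hlc : Nat.gcd l s = 1) :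
    r * s ∣ k * s + l * r ↔ r = s ∧ l = r - k % r := by
  constructor
  · intro h
    have hks : r ∣ k * s := by
      have h1 : r ∣ k * s + l * r := dvd_trans (dvd_mul_right r s) h
      have h2 := Nat.dvd_sub h1 (dvd_mul_left r l)
      simpa using h2
    have hlr : s ∣ l * r := by
      have h1 : s ∣ k * s + l * r := dvd_trans (dvd_mul_left s r) h
      have h2 := Nat.dvd_sub h1 (dvd_mul_left s k)
      simpa using h2
    have hrs : r = s :=
      Nat.dvd_antisymm ((Nat.Coprime.symm hkc).dvd_of_dvd_mul_left hks)
        ((Nat.Coprime.symm hlc).dvd_of_dvd_mul_left hlr)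
    subst hrs
    refine ⟨rfl, ?_⟩
    obtain ⟨t, ht⟩ := h
    have hkl : k + l = r * t := by
      have h1 : (k + l) * r = (r * t) * r := by
        calc (k + l) * r = k * r + l * r := by ring
        _ = r * r * t := ht
        _ = (r * t) * r := by ring
      exact Nat.eq_of_mul_eq_mul_right hr h1
    have ht2 : t ≤ 2 := by
      have h2' : r * t ≤ r * 2 := by
        calc r * t = k + l := hkl.symm
        _ ≤ r * 2 := by omega
      exact Nat.le_of_mul_le_mul_left h2' hr
    have hmod : k % r = k ∨ (k = r ∧ k % r = 0) := by
      rcases lt_or_eq_of_le hk2 with h' | h'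
      · exact Or.inl (Nat.mod_eq_of_lt h')
      · exact Or.inr ⟨h', by rw [h']; exact Nat.mod_self r⟩
    have hr1 : k = r → r = 1 := by
      intro hkk
      rw [hkk, Nat.gcd_self] at hkc
      exact hkc
    clear ht hks hlr
    have hkr : k % r < r := Nat.mod_lt _ hr
    rcases hmod with hm | ⟨hkeq, hm⟩
    · interval_cases t <;> omega
    · have hre := hr1 hkeq
      interval_cases t <;> omega
  · rintro ⟨rfl, rfl⟩
    have hkr : k % r < r := Nat.mod_lt _ hr
    have h2 := Nat.mod_add_div k r
    have h1 : k + (r - k % r) = r * (k / r + 1) := by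
      rw [Nat.mul_add, Nat.mul_one]; omega
    have hdvd : r ∣ k + (r - k % r) := ⟨k / r + 1, h1⟩
    have h3 : k * r + (r - k % r) * r = (k + (r - k % r)) * r := by ring
    rw [h3]
    exact mul_dvd_mul_right hdvd r

lemma companion_mem (r k : ℕ) (hr : 0 < r) (hk1 : 1 ≤ k) (hk2 : k ≤ r)
    (hkc : Nat.gcd k r = 1) :
    (r - k % r) ∈ (Finset.Icc 1 r).filter (fun k => Nat.gcd k r = 1) := by
  have hkr : k % r < r := Nat.mod_lt _ hr
  simp only [Finset.mem_filter, Finset.mem_Icc]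
  refine ⟨⟨by omega, by omega⟩, ?_⟩
  have h1 : Nat.Coprime (r - k % r) r ↔ Nat.Coprime (k % r) r :=
    Nat.coprime_self_sub_left (le_of_lt hkr)
  have h2 : Nat.gcd (k % r) r = Nat.gcd k r := by
    rw [← Nat.gcd_rec, Nat.gcd_comm]
  exact h1.mpr (by rw [Nat.Coprime, h2]; exact hkc)

lemma cardA (r : ℕ) (hr : 0 < r) :
    ((Finset.Icc 1 r).filter (fun k => Nat.gcd k r = 1)).card = r.totient := by
  rw [← Nat.filter_coprime_Ico_eq_totient r 1]
  congr 1
  rw [add_comm, Finset.Ico_add_one_right_eq_Icc]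
  apply Finset.filter_congr
  intro x _
  simp [Nat.Coprime, Nat.gcd_comm]

lemma card_good (r s : ℕ) (hr : 0 < r) (hs : 0 < s) :
    (((((Finset.Icc 1 r).filter (fun k => Nat.gcd k r = 1)) ×ˢ
        ((Finset.Icc 1 s).filter (fun k => Nat.gcd k s = 1))).filter
        (fun p => e p.1 r * e p.2 s = 1)).card : ℂ)
      = if r = s then (r.totient : ℂ) else 0 := by
  have hmem : ∀ p : ℕ × ℕ,
      p ∈ ((((Finset.Icc 1 r).filter (fun k => Nat.gcd k r = 1)) ×ˢ
        ((Finset.Icc 1 s).filter (fun k => Nat.gcd k s = 1))).filter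
        (fun p => e p.1 r * e p.2 s = 1)) ↔
      (p.1 ∈ Finset.Icc 1 r ∧ Nat.gcd p.1 r = 1) ∧
      (p.2 ∈ Finset.Icc 1 s ∧ Nat.gcd p.2 s = 1) ∧ (r = s ∧ p.2 = r - p.1 % r) := by
    rintro ⟨k, l⟩
    simp only [Finset.mem_filter, Finset.mem_product, Finset.mem_Icc]
    constructor
    · rintro ⟨⟨⟨hk, hkc⟩, ⟨hl, hlc⟩⟩, hcond⟩
      rw [e_mul_e_eq_one_iff k l r s hr hs,
        count_dvd_iff r s k l hr hs hk.1 hk.2 hkc hl.1 hl.2 hlc] at hcond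
      exact ⟨⟨hk, hkc⟩, ⟨hl, hlc⟩, hcond⟩
    · rintro ⟨⟨hk, hkc⟩, ⟨hl, hlc⟩, hcond⟩
      refine ⟨⟨⟨hk, hkc⟩, ⟨hl, hlc⟩⟩, ?_⟩
      rw [e_mul_e_eq_one_iff k l r s hr hs,
        count_dvd_iff r s k l hr hs hk.1 hk.2 hkc hl.1 hl.2 hlc]
      exact hcond
  by_cases hrs : r = s
  · subst hrs
    simp only [if_pos rfl]
    congr 1
    norm_cast
    rw [← cardA r hr]
    have himg : ((((Finset.Icc 1 r).filter (fun k => Nat.gcd k r = 1)) ×ˢ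
        ((Finset.Icc 1 r).filter (fun k => Nat.gcd k r = 1))).filter
        (fun p => e p.1 r * e p.2 r = 1))
        = ((Finset.Icc 1 r).filter (fun k => Nat.gcd k r = 1)).image
          (fun k => (k, r - k % r)) := by
      ext ⟨k, l⟩
      rw [hmem (k, l)]
      simp only [Finset.mem_image, Finset.mem_filter, Finset.mem_Icc, Prod.mk.injEq]
      constructor
      · rintro ⟨⟨hk, hkc⟩, ⟨hl, hlc⟩, -, hcomp⟩
        exact ⟨k, ⟨hk, hkc⟩, rfl, hcomp.symm⟩
      · rintro ⟨a, ⟨ha, hac⟩, rfl, rfl⟩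
        have hc := companion_mem r a hr ha.1 ha.2 hac
        simp only [Finset.mem_filter, Finset.mem_Icc] at hc
        exact ⟨⟨ha, hac⟩, hc, trivial, rfl⟩
    rw [himg]
    apply Finset.card_image_of_injective
    intro a b hab
    exact congrArg Prod.fst hab
  · simp only [if_neg hrs]
    norm_cast
    rw [Finset.card_eq_zero, Finset.filter_eq_empty_iff]
    intro p hp
    intro hcond
    have := (hmem p).mp (Finset.mem_filter.mpr ⟨hp, hcond⟩)
    exact hrs this.2.2.1

lemma geom_bound (u : ℂ) (hu : ‖u‖ = 1) (hne : u ≠ 1) (N : ℕ) :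
    ‖∑ n ∈ Finset.Icc 1 N, u ^ n‖ ≤ 2 / ‖u - 1‖ := by
  have h1 : ∑ n ∈ Finset.Icc 1 N, u ^ n = u * ∑ n ∈ Finset.range N, u ^ n := by
    rw [← Finset.Ico_add_one_right_eq_Icc, Finset.sum_Ico_eq_sum_range]
    simp only [Nat.add_sub_cancel, Nat.succ_sub_one]
    rw [Finset.mul_sum]
    refine Finset.sum_congr rfl fun i _ => ?_
    rw [pow_add, pow_one]
  have h2 : ∑ n ∈ Finset.range N, u ^ n = (u ^ N - 1) / (u - 1) := geom_sum_eq hne N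
  rw [h1, h2, norm_mul, hu, one_mul, norm_div]
  gcongr
  calc ‖u ^ N - 1‖ ≤ ‖u ^ N‖ + ‖(1 : ℂ)‖ := norm_sub_le _ _
    _ = 2 := by rw [norm_pow, hu, one_pow, norm_one]; norm_num

/-- The index set of pairs. -/
noncomputable def P (r s : ℕ) : Finset (ℕ × ℕ) :=
  ((Finset.Icc 1 r).filter (fun k => Nat.gcd k r = 1)) ×ˢ
    ((Finset.Icc 1 s).filter (fun k => Nat.gcd k s = 1))

/-- The pairs whose associated root of unity is `1`. -/
noncomputable def good (r s : ℕ) : Finset (ℕ × ℕ) :=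
  (P r s).filter (fun p => e p.1 r * e p.2 s = 1)

/-- The remaining pairs. -/
noncomputable def bad (r s : ℕ) : Finset (ℕ × ℕ) := P r s \ good r s

lemma key (r s : ℕ) (N : ℕ) :
    ∑ n ∈ Finset.Icc 1 N, ramanujanSum n r * ramanujanSum n s
      = (N : ℂ) * (good r s).card
        + ∑ p ∈ bad r s, ∑ n ∈ Finset.Icc 1 N, (e p.1 r * e p.2 s) ^ n := by
  have h1 : ∀ n : ℕ, ramanujanSum n r * ramanujanSum n s
      = ∑ p ∈ P r s, (e p.1 r * e p.2 s) ^ n := by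
    intro n
    rw [ramanujanSum, ramanujanSum, Finset.sum_mul_sum, P, Finset.sum_product]
    refine Finset.sum_congr rfl fun k _ => Finset.sum_congr rfl fun l _ => ?_
    rw [e_pow, e_pow, mul_pow]
  calc ∑ n ∈ Finset.Icc 1 N, ramanujanSum n r * ramanujanSum n s
      = ∑ n ∈ Finset.Icc 1 N, ∑ p ∈ P r s, (e p.1 r * e p.2 s) ^ n :=
        Finset.sum_congr rfl fun n _ => h1 n
    _ = ∑ p ∈ P r s, ∑ n ∈ Finset.Icc 1 N, (e p.1 r * e p.2 s) ^ n := Finset.sum_comm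
    _ = (∑ p ∈ bad r s, ∑ n ∈ Finset.Icc 1 N, (e p.1 r * e p.2 s) ^ n)
        + ∑ p ∈ good r s, ∑ n ∈ Finset.Icc 1 N, (e p.1 r * e p.2 s) ^ n := by
        rw [bad]
        exact (Finset.sum_sdiff (Finset.filter_subset _ _)).symm
    _ = (N : ℂ) * (good r s).card
        + ∑ p ∈ bad r s, ∑ n ∈ Finset.Icc 1 N, (e p.1 r * e p.2 s) ^ n := by
        rw [add_comm]
        congr 1
        have hgood : ∀ p ∈ good r s, ∑ n ∈ Finset.Icc 1 N, (e p.1 r * e p.2 s) ^ n = (N : ℂ) := by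
          intro p hp
          rw [good, Finset.mem_filter] at hp
          rw [Finset.sum_congr rfl (fun n _ => by rw [hp.2, one_pow])]
          simp [Nat.Icc_eq_range', mul_comm]
        rw [Finset.sum_congr rfl hgood, Finset.sum_const, nsmul_eq_mul, mul_comm]

end RamAux

/-- Orthogonality of Ramanujan sums: the mean value of `n ↦ c(n,r) c(n,s)` exists and
equals `δ_{r,s} φ(r)`. -/
theorem ramanujanSum_orthogonality (r s : ℕ) (hr : 0 < r) (hs : 0 < s) :
    Tendsto
      (fun x : ℝ =>
        (∑ n ∈ Finset.Icc 1 ⌊x⌋₊, ramanujanSum n r * ramanujanSum n s) / (x : ℂ))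
      atTop
      (𝓝 (if r = s then (Nat.totient r : ℂ) else 0)) := by
  classical
  set C : ℝ := ∑ p ∈ RamAux.bad r s, 2 / ‖RamAux.e p.1 r * RamAux.e p.2 s - 1‖ with hC
  have hE : ∀ N : ℕ,
      ‖∑ p ∈ RamAux.bad r s, ∑ n ∈ Finset.Icc 1 N, (RamAux.e p.1 r * RamAux.e p.2 s) ^ n‖ ≤ C := by
    intro N
    refine le_trans (norm_sum_le _ _) (Finset.sum_le_sum ?_)
    intro p hp
    rw [RamAux.bad, Finset.mem_sdiff, RamAux.good, Finset.mem_filter] at hp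
    have hne : RamAux.e p.1 r * RamAux.e p.2 s ≠ 1 := fun hh => hp.2 ⟨hp.1, hh⟩
    exact RamAux.geom_bound _
      (by rw [norm_mul, RamAux.norm_e, RamAux.norm_e, one_mul]) hne N
  have hcard : ((RamAux.good r s).card : ℂ) = if r = s then (r.totient : ℂ) else 0 :=
    RamAux.card_good r s hr hs
  rw [← hcard]
  have heq : (fun x : ℝ =>
      (∑ n ∈ Finset.Icc 1 ⌊x⌋₊, ramanujanSum n r * ramanujanSum n s) / (x : ℂ))
      = fun x : ℝ => ((⌊x⌋₊ : ℂ) / (x : ℂ)) * ((RamAux.good r s).card : ℂ)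
        + (∑ p ∈ RamAux.bad r s, ∑ n ∈ Finset.Icc 1 ⌊x⌋₊,
            (RamAux.e p.1 r * RamAux.e p.2 s) ^ n) / (x : ℂ) := by
    funext x
    rw [RamAux.key r s ⌊x⌋₊, add_div, mul_div_right_comm]
  rw [heq]
  have lim1 : Tendsto (fun x : ℝ => (⌊x⌋₊ : ℂ) / (x : ℂ)) atTop (𝓝 1) := by
    have h := (Complex.continuous_ofReal.tendsto 1).comp (tendsto_nat_floor_div_atTop (R := ℝ))
    rw [Complex.ofReal_one] at h
    refine h.congr fun x => ?_
    simp [Function.comp, Complex.ofReal_div]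
  have lim2 : Tendsto (fun x : ℝ =>
      (∑ p ∈ RamAux.bad r s, ∑ n ∈ Finset.Icc 1 ⌊x⌋₊,
        (RamAux.e p.1 r * RamAux.e p.2 s) ^ n) / (x : ℂ)) atTop (𝓝 0) := by
    refine squeeze_zero_norm' (a := fun x : ℝ => C / x) ?_ ?_
    · filter_upwards [eventually_gt_atTop (0 : ℝ)] with x hx
      rw [norm_div, Complex.norm_real, Real.norm_eq_abs, abs_of_pos hx]
      exact div_le_div_of_nonneg_right (hE ⌊x⌋₊) hx.le
    · exact Tendsto.div_atTop tendsto_const_nhds tendsto_id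
  have final := (lim1.mul_const ((RamAux.good r s).card : ℂ)).add lim2
  simpa using final
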